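/- arXiv:2203.04993 — 3 statements merged into one kernel-verified Lean document; each statement's English description precedes it below -/
import Mathlib

section
/- Let μ₂ > μ₃ ≥ 0 be real numbers and let (t_s)_{s∈ℕ} be a sequence of reals with 0 ≤ t_s ≤ 1 for all s. Define T(μ) = ∑_{s=0}^∞ e^{−μ} (μ^s/s!) t_s (the series converges absolutely). Then t₀ ≥ (μ₂ e^{μ₃} T(μ₃) − μ₃ e^{μ₂} T(μ₂)) / (μ₂ − μ₃). -/
/-- The observable quantity at laser intensity `μ`:
`T(μ) = ∑_{s=0}^∞ e^{−μ} (μ^s/s!) t_s` (Poisson average of `(t_s)`). -/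
noncomputable def decoyT (μ : ℝ) (t : ℕ → ℝ) : ℝ :=
  ∑' s : ℕ, Real.exp (-μ) * μ ^ s / (Nat.factorial s : ℝ) * t s

lemma decoy_summable (μ : ℝ) (hμ : 0 ≤ μ) (t : ℕ → ℝ) (ht0 : ∀ s, 0 ≤ t s)
    (ht1 : ∀ s, t s ≤ 1) :
    Summable (fun s : ℕ => μ ^ s / (Nat.factorial s : ℝ) * t s) := by
  apply Summable.of_nonneg_of_le
    (fun s => mul_nonneg (div_nonneg (pow_nonneg hμ s) (by positivity)) (ht0 s))
    (fun s => ?_) (Real.summable_pow_div_factorial μ)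
  calc μ ^ s / (Nat.factorial s : ℝ) * t s
      ≤ μ ^ s / (Nat.factorial s : ℝ) * 1 := by
        apply mul_le_mul_of_nonneg_left (ht1 s)
        positivity
    _ = μ ^ s / (Nat.factorial s : ℝ) := mul_one _

lemma decoyT_eq (μ : ℝ) (t : ℕ → ℝ) :
    Real.exp μ * decoyT μ t = ∑' s : ℕ, μ ^ s / (Nat.factorial s : ℝ) * t s := by
  unfold decoyT
  have : ∀ s : ℕ, Real.exp (-μ) * μ ^ s / (Nat.factorial s : ℝ) * t s
      = Real.exp (-μ) * (μ ^ s / (Nat.factorial s : ℝ) * t s) := fun s => by ring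
  simp_rw [this, tsum_mul_left, ← mul_assoc, ← Real.exp_add]
  simp

/-- **Decoy-state lower bound on the vacuum term `t₀`.**
For intensities `μ₂ > μ₃ ≥ 0` and per-photon-number probabilities
`0 ≤ t_s ≤ 1`, one has
`t₀ ≥ (μ₂ e^{μ₃} T(μ₃) − μ₃ e^{μ₂} T(μ₂)) / (μ₂ − μ₃)`. -/
theorem decoy_t0_lower_bound (μ₂ μ₃ : ℝ) (h32 : μ₃ < μ₂) (h3 : 0 ≤ μ₃)
    (t : ℕ → ℝ) (ht0 : ∀ s, 0 ≤ t s) (ht1 : ∀ s, t s ≤ 1) :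
    (μ₂ * Real.exp μ₃ * decoyT μ₃ t - μ₃ * Real.exp μ₂ * decoyT μ₂ t) / (μ₂ - μ₃)
      ≤ t 0 := by
  have h2 : 0 ≤ μ₂ := le_of_lt (lt_of_le_of_lt h3 h32)
  have hs2 := decoy_summable μ₂ h2 t ht0 ht1
  have hs3 := decoy_summable μ₃ h3 t ht0 ht1
  rw [div_le_iff₀ (by linarith)]
  have e2 := decoyT_eq μ₂ t
  have e3 := decoyT_eq μ₃ t
  have key : μ₂ * (Real.exp μ₃ * decoyT μ₃ t) - μ₃ * (Real.exp μ₂ * decoyT μ₂ t)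
      = ∑' s : ℕ, (μ₂ * (μ₃ ^ s / (Nat.factorial s : ℝ) * t s)
          - μ₃ * (μ₂ ^ s / (Nat.factorial s : ℝ) * t s)) := by
    rw [e2, e3, Summable.tsum_sub (hs3.mul_left μ₂) (hs2.mul_left μ₃),
      tsum_mul_left, tsum_mul_left]
  have hle : (∑' s : ℕ, (μ₂ * (μ₃ ^ s / (Nat.factorial s : ℝ) * t s)
          - μ₃ * (μ₂ ^ s / (Nat.factorial s : ℝ) * t s))) ≤ (μ₂ - μ₃) * t 0 := by
    rw [Summable.tsum_eq_zero_add ((hs3.mul_left μ₂).sub (hs2.mul_left μ₃))]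
    have h0 : μ₂ * (μ₃ ^ 0 / (Nat.factorial 0 : ℝ) * t 0)
        - μ₃ * (μ₂ ^ 0 / (Nat.factorial 0 : ℝ) * t 0) = (μ₂ - μ₃) * t 0 := by
      simp; ring
    rw [h0]
    have htail : (∑' s : ℕ, (μ₂ * (μ₃ ^ (s + 1) / (Nat.factorial (s + 1) : ℝ) * t (s + 1))
          - μ₃ * (μ₂ ^ (s + 1) / (Nat.factorial (s + 1) : ℝ) * t (s + 1)))) ≤ 0 := by
      apply tsum_nonpos
      intro s
      have hpow : μ₂ * μ₃ ^ (s + 1) ≤ μ₃ * μ₂ ^ (s + 1) := by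
        have : μ₂ * μ₃ ^ (s + 1) = (μ₂ * μ₃) * μ₃ ^ s := by ring
        rw [this]
        have : μ₃ * μ₂ ^ (s + 1) = (μ₂ * μ₃) * μ₂ ^ s := by ring
        rw [this]
        exact mul_le_mul_of_nonneg_left (pow_le_pow_left₀ h3 (le_of_lt h32) s)
          (mul_nonneg h2 h3)
      have hf : (0:ℝ) ≤ t (s + 1) / (Nat.factorial (s + 1) : ℝ) :=
        div_nonneg (ht0 _) (by positivity)
      have : μ₂ * (μ₃ ^ (s + 1) / (Nat.factorial (s + 1) : ℝ) * t (s + 1))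
          - μ₃ * (μ₂ ^ (s + 1) / (Nat.factorial (s + 1) : ℝ) * t (s + 1))
          = (μ₂ * μ₃ ^ (s + 1) - μ₃ * μ₂ ^ (s + 1)) * (t (s + 1) / (Nat.factorial (s + 1) : ℝ)) := by
        ring
      rw [this]
      exact mul_nonpos_of_nonpos_of_nonneg (by linarith) hf
    linarith
  calc μ₂ * Real.exp μ₃ * decoyT μ₃ t - μ₃ * Real.exp μ₂ * decoyT μ₂ t
      = μ₂ * (Real.exp μ₃ * decoyT μ₃ t) - μ₃ * (Real.exp μ₂ * decoyT μ₂ t) := by ring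
    _ ≤ (μ₂ - μ₃) * t 0 := by rw [key]; exact hle
    _ = t 0 * (μ₂ - μ₃) := by ring
end

section
/- Let a, b, c be real numbers with a ≥ b ≥ 0 and c ≥ a + b, and let s ≥ 2 be a natural number. Then a^s − b^s ≤ (a² − b²) · c^{s−2}. -/
private lemma decoy_aux (a b c : ℝ) (hab : b ≤ a) (hb : 0 ≤ b)
    (hc : a + b ≤ c) : ∀ k : ℕ, a ^ (k + 2) - b ^ (k + 2) ≤ (a ^ 2 - b ^ 2) * c ^ k := by
  have ha : 0 ≤ a := hb.trans hab
  have hc0 : 0 ≤ c := by linarith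
  intro k
  induction k with
  | zero => simp
  | succ k ih =>
    have hck : (0:ℝ) ≤ c ^ k := pow_nonneg hc0 k
    have hbk : b ^ k ≤ c ^ k := pow_le_pow_left₀ hb (by linarith) k
    have h1 : a ^ (k + 3) - b ^ (k + 3)
        = a * (a ^ (k + 2) - b ^ (k + 2)) + b ^ (k + 2) * (a - b) := by ring
    have h2 : a * (a ^ (k + 2) - b ^ (k + 2)) ≤ a * ((a ^ 2 - b ^ 2) * c ^ k) :=
      mul_le_mul_of_nonneg_left ih ha
    have h3 : b ^ (k + 2) * (a - b) ≤ b * (a + b) * c ^ k * (a - b) := by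
      have : b ^ (k + 2) ≤ b * (a + b) * c ^ k := by
        have : b ^ (k+2) = b ^ k * b ^ 2 := by ring
        rw [this]
        have hb2 : b ^ 2 ≤ b * (a + b) := by nlinarith
        calc b ^ k * b ^ 2 ≤ c ^ k * (b * (a + b)) := by
              apply mul_le_mul hbk hb2 (by positivity) hck
          _ = b * (a + b) * c ^ k := by ring
      exact mul_le_mul_of_nonneg_right this (by linarith)
    have h4 : (a ^ 2 - b ^ 2) * (a + b) * c ^ k ≤ (a ^ 2 - b ^ 2) * c ^ (k + 1) := by
      have hab2 : 0 ≤ a ^ 2 - b ^ 2 := by nlinarith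
      have := mul_le_mul_of_nonneg_left hc (mul_nonneg hab2 hck)
      calc (a ^ 2 - b ^ 2) * (a + b) * c ^ k
          = (a ^ 2 - b ^ 2) * c ^ k * (a + b) := by ring
        _ ≤ (a ^ 2 - b ^ 2) * c ^ k * c := this
        _ = (a ^ 2 - b ^ 2) * c ^ (k + 1) := by ring
    calc a ^ (k + 1 + 2) - b ^ (k + 1 + 2)
        = a * (a ^ (k + 2) - b ^ (k + 2)) + b ^ (k + 2) * (a - b) := by ring
      _ ≤ a * ((a ^ 2 - b ^ 2) * c ^ k) + b * (a + b) * c ^ k * (a - b) :=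
          add_le_add h2 h3
      _ = (a ^ 2 - b ^ 2) * (a + b) * c ^ k := by ring
      _ ≤ (a ^ 2 - b ^ 2) * c ^ (k + 1) := h4

/-- **Key algebraic inequality of the decoy-state analysis.**
For reals `a ≥ b ≥ 0`, `c ≥ a + b`, and a natural number `s ≥ 2`,
`a^s − b^s ≤ (a² − b²)·c^{s−2}`. -/
theorem decoy_pow_inequality (a b c : ℝ) (hab : b ≤ a) (hb : 0 ≤ b)
    (hc : a + b ≤ c) (s : ℕ) (hs : 2 ≤ s) :
    a ^ s - b ^ s ≤ (a ^ 2 - b ^ 2) * c ^ (s - 2) := by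
  obtain ⟨k, rfl⟩ : ∃ k, s = k + 2 := ⟨s - 2, by omega⟩
  simpa using decoy_aux a b c hab hb hc k
end

section
/- Let 𝒮, ℰ, 𝒟, 𝒦 be finite nonempty sets and Ext : 𝒮 × 𝒟 → 𝒦 a function. For a nonnegative function p : 𝒮 × ℰ → ℝ with ∑_{s,e} p(s,e) ≤ 1 (a subnormalized distribution), define H_min(S|E)_p = −log₂( ∑_{e∈ℰ} max_{s∈𝒮} p(s,e) ) and the extractor error Δ(p) = ∑_{κ∈𝒦} ∑_{y∈𝒟} ∑_{e∈ℰ} | (1/|𝒟|)·∑_{s : Ext(s,y)=κ} p(s,e) − (1/(|𝒦|·|𝒟|))·∑_{s∈𝒮} p(s,e) |. Suppose Ext is a strong (k, ε_Ext)-extractor against classical side information: Δ(q) ≤ ε_Ext for every subnormalized distribution q on 𝒮 × ℰ with H_min(S|E)_q ≥ k. Then for every subnormalized distribution p on 𝒮 × ℰ for which there exists a subnormalized distribution q with ∑_{s,e} |p(s,e) − q(s,e)| ≤ 2ε and H_min(S|E)_q ≥ k, one has Δ(p) ≤ ε_Ext + 4ε. -/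
/-- The classical conditional min-entropy
`H_min(S|E)_p = −log₂(∑_e max_s p(s,e))` of a subnormalized distribution `p`
on `𝒮 × ℰ`. -/
noncomputable def HminCl {S E : Type*} [Fintype S] [Fintype E] [Nonempty S]
    (p : S → E → ℝ) : ℝ :=
  -Real.logb 2 (∑ e, Finset.univ.sup' Finset.univ_nonempty fun s => p s e)

/-- The extractor error
`Δ(p) = ∑_{κ,y,e} |(1/|𝒟|)·∑_{s : Ext(s,y)=κ} p(s,e) − (1/(|𝒦||𝒟|))·∑_s p(s,e)|`,
the ℓ¹ distance of `(Ext(S, seed), E, seed)` from uniform on `𝒦` times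
`(E, seed)`. -/
noncomputable def extErr {S E D K : Type*} [Fintype S] [Fintype E] [Fintype D]
    [Fintype K] [DecidableEq K] (Ext : S × D → K) (p : S → E → ℝ) : ℝ :=
  ∑ κ : K, ∑ y : D, ∑ e : E,
    |(1 / (Fintype.card D : ℝ)) *
        ∑ s ∈ Finset.univ.filter (fun s => Ext (s, y) = κ), p s e
      - (1 / ((Fintype.card K : ℝ) * (Fintype.card D : ℝ))) * ∑ s, p s e|

/-- **Smoothed strong extractor bound (classical side information).**
If `Ext` is a strong `(k, ε_Ext)`-extractor (error at most `ε_Ext` on every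
subnormalized distribution with min-entropy at least `k`), then its error on
any subnormalized distribution `p` that is `2ε`-close in ℓ¹ distance to some
subnormalized distribution with min-entropy at least `k` is at most
`ε_Ext + 4ε`. -/
theorem smoothed_extractor_bound {S E D K : Type*} [Fintype S] [Fintype E]
    [Fintype D] [Fintype K] [Nonempty S] [Nonempty E] [Nonempty D] [Nonempty K]
    [DecidableEq K]
    (Ext : S × D → K) (k εExt ε : ℝ)
    (hstrong : ∀ q : S → E → ℝ, (∀ s e, 0 ≤ q s e) → (∑ s, ∑ e, q s e) ≤ 1 →
      k ≤ HminCl q → extErr Ext q ≤ εExt)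
    (p : S → E → ℝ) (hp0 : ∀ s e, 0 ≤ p s e) (hp1 : (∑ s, ∑ e, p s e) ≤ 1)
    (hclose : ∃ q : S → E → ℝ, (∀ s e, 0 ≤ q s e) ∧ (∑ s, ∑ e, q s e) ≤ 1 ∧
      (∑ s, ∑ e, |p s e - q s e|) ≤ 2 * ε ∧ k ≤ HminCl q) :
    extErr Ext p ≤ εExt + 4 * ε := by
  obtain ⟨q, hq0, hq1, hpq, hqk⟩ := hclose
  have hqerr : extErr Ext q ≤ εExt := hstrong q hq0 hq1 hqk
  set cD := (Fintype.card D : ℝ) with hcDdef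
  set cK := (Fintype.card K : ℝ) with hcKdef
  have hcD0 : 0 < cD := by rw [hcDdef]; exact_mod_cast (Fintype.card_pos : 0 < Fintype.card D)
  have hcK0 : 0 < cK := by rw [hcKdef]; exact_mod_cast (Fintype.card_pos : 0 < Fintype.card K)
  set T := ∑ s, ∑ e, |p s e - q s e| with hTdef
  -- pointwise bound
  have hpt : ∀ κ : K, ∀ y : D, ∀ e : E,
      |(1 / cD) * ∑ s ∈ Finset.univ.filter (fun s => Ext (s, y) = κ), p s e
        - (1 / (cK * cD)) * ∑ s, p s e|
      ≤ |(1 / cD) * ∑ s ∈ Finset.univ.filter (fun s => Ext (s, y) = κ), q s e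
        - (1 / (cK * cD)) * ∑ s, q s e|
        + ((1 / cD) * ∑ s ∈ Finset.univ.filter (fun s => Ext (s, y) = κ),
              |p s e - q s e|
          + (1 / (cK * cD)) * ∑ s, |p s e - q s e|) := by
    intro κ y e
    set Ap := (1 / cD) * ∑ s ∈ Finset.univ.filter (fun s => Ext (s, y) = κ), p s e
      - (1 / (cK * cD)) * ∑ s, p s e with hApdef
    set Aq := (1 / cD) * ∑ s ∈ Finset.univ.filter (fun s => Ext (s, y) = κ), q s e
      - (1 / (cK * cD)) * ∑ s, q s e with hAqdef
    have h1 : |Ap| - |Aq| ≤ |Ap - Aq| := abs_sub_abs_le_abs_sub _ _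
    have h2 : |Ap - Aq| ≤
        (1 / cD) * ∑ s ∈ Finset.univ.filter (fun s => Ext (s, y) = κ),
            |p s e - q s e|
        + (1 / (cK * cD)) * ∑ s, |p s e - q s e| := by
      have hrw : Ap - Aq =
          (1 / cD) * ∑ s ∈ Finset.univ.filter (fun s => Ext (s, y) = κ),
              (p s e - q s e)
          - (1 / (cK * cD)) * ∑ s, (p s e - q s e) := by
        rw [hApdef, hAqdef, Finset.sum_sub_distrib, Finset.sum_sub_distrib]
        ring
      rw [hrw]
      refine (abs_sub _ _).trans ?_
      gcongr
      · rw [abs_mul, abs_of_nonneg (by positivity : (0:ℝ) ≤ 1 / cD)]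
        gcongr
        exact Finset.abs_sum_le_sum_abs _ _
      · rw [abs_mul, abs_of_nonneg (by positivity : (0:ℝ) ≤ 1 / (cK * cD))]
        gcongr
        exact Finset.abs_sum_le_sum_abs _ _
    linarith
  -- sum the pointwise bound
  have hsum : extErr Ext p ≤ extErr Ext q
      + ((∑ κ : K, ∑ y : D, ∑ e : E,
            (1 / cD) * ∑ s ∈ Finset.univ.filter (fun s => Ext (s, y) = κ),
              |p s e - q s e|)
        + ∑ κ : K, ∑ y : D, ∑ e : E,
            (1 / (cK * cD)) * ∑ s, |p s e - q s e|) := by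
    unfold extErr
    rw [← Finset.sum_add_distrib, ← Finset.sum_add_distrib]
    refine Finset.sum_le_sum fun κ _ => ?_
    rw [← Finset.sum_add_distrib, ← Finset.sum_add_distrib]
    refine Finset.sum_le_sum fun y _ => ?_
    rw [← Finset.sum_add_distrib, ← Finset.sum_add_distrib]
    exact Finset.sum_le_sum fun e _ => hpt κ y e
  have hA : (∑ κ : K, ∑ y : D, ∑ e : E,
      (1 / cD) * ∑ s ∈ Finset.univ.filter (fun s => Ext (s, y) = κ),
        |p s e - q s e|) = T := by
    rw [Finset.sum_comm]
    have hy : ∀ y : D, (∑ κ : K, ∑ e : E,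
        (1 / cD) * ∑ s ∈ Finset.univ.filter (fun s => Ext (s, y) = κ),
          |p s e - q s e|) = (1 / cD) * T := by
      intro y
      rw [Finset.sum_comm]
      rw [show (∑ e : E, ∑ κ : K,
          (1 / cD) * ∑ s ∈ Finset.univ.filter (fun s => Ext (s, y) = κ),
            |p s e - q s e|)
        = ∑ e : E, (1 / cD) * ∑ κ : K,
            ∑ s ∈ Finset.univ.filter (fun s => Ext (s, y) = κ),
              |p s e - q s e| from by simp [Finset.mul_sum]]
      have hfib : ∀ e : E, (∑ κ : K,
          ∑ s ∈ Finset.univ.filter (fun s => Ext (s, y) = κ), |p s e - q s e|)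
          = ∑ s, |p s e - q s e| := fun e =>
        Finset.sum_fiberwise_of_maps_to (fun s _ => Finset.mem_univ _) _
      simp only [hfib]
      rw [← Finset.mul_sum, hTdef, Finset.sum_comm]
    rw [Finset.sum_congr rfl fun y _ => hy y, Finset.sum_const,
      Finset.card_univ, nsmul_eq_mul]
    field_simp
    rfl
  have hB : (∑ κ : K, ∑ y : D, ∑ e : E,
      (1 / (cK * cD)) * ∑ s, |p s e - q s e|) = T := by
    have : (∑ e : E, (1 / (cK * cD)) * ∑ s, |p s e - q s e|)
        = (1 / (cK * cD)) * T := by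
      rw [← Finset.mul_sum, hTdef, Finset.sum_comm]
    simp only [this, Finset.sum_const, Finset.card_univ, nsmul_eq_mul]
    field_simp
    ring
  rw [hA, hB] at hsum
  have hT2 : T ≤ 2 * ε := hpq
  linarith
end
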